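/- Let f ∈ C¹[a,b] have a derivative f' with finitely many zeros, and let g ∈ C¹[a,b] with g' > 0 on [a,b]. For every δ > 0 there exists a positive integer r such that for every n and every n-partition Δ of [a,b], (n + r)^{1/2} · (∫ₐᵇ f dg − LS(f,g,Δ))^{1/2} ≥ (1/√2) ∫ₐᵇ √(|f'(t)| g'(t)) dt − δ(b − a), where LS(f,g,Δ) is the lower Riemann–Stieltjes sum of f with respect to g over Δ. -/

import Mathlib

open Set MeasureTheory intervalIntegral

-- monotonicity of partition
private lemma part_mono {n : ℕ} {t : ℕ → ℝ} (h : ∀ i < n, t i < t (i + 1)) :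
    ∀ j ≤ n, ∀ i ≤ j, t i ≤ t j := by
  intro j hj
  induction j with
  | zero => intro i hi; interval_cases i; rfl
  | succ k ih =>
    intro i hi
    rcases Nat.lt_or_ge i (k+1) with h1 | h1
    · exact le_trans (ih (by omega) i (by omega)) (h k (by omega)).le
    · have : i = k + 1 := by omega
      simp [this]

-- Cauchy-Schwarz: ∑ √xᵢ·yᵢ form
private lemma cs_sqrt {n : ℕ} (x y : ℕ → ℝ) (hx : ∀ i ∈ Finset.range n, 0 ≤ x i)
    (hy : ∀ i ∈ Finset.range n, 0 ≤ y i) :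
    ∑ i ∈ Finset.range n, Real.sqrt (x i) * Real.sqrt (y i) ≤
      Real.sqrt (∑ i ∈ Finset.range n, x i) * Real.sqrt (∑ i ∈ Finset.range n, y i) := by
  have h := Finset.sum_sq_le_sum_mul_sum_of_sq_eq_mul (Finset.range n)
      (f := x) (g := y) (r := fun i => Real.sqrt (x i) * Real.sqrt (y i)) hx hy
      (fun i hi => by rw [mul_pow, Real.sq_sqrt (hx i hi), Real.sq_sqrt (hy i hi)])
  have h0 : 0 ≤ ∑ i ∈ Finset.range n, Real.sqrt (x i) * Real.sqrt (y i) :=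
    Finset.sum_nonneg fun i _ => mul_nonneg (Real.sqrt_nonneg _) (Real.sqrt_nonneg _)
  calc ∑ i ∈ Finset.range n, Real.sqrt (x i) * Real.sqrt (y i)
      = Real.sqrt ((∑ i ∈ Finset.range n, Real.sqrt (x i) * Real.sqrt (y i))^2) := by
        rw [Real.sqrt_sq h0]
    _ ≤ Real.sqrt ((∑ i ∈ Finset.range n, x i) * ∑ i ∈ Finset.range n, y i) :=
        Real.sqrt_le_sqrt h
    _ = _ := Real.sqrt_mul (Finset.sum_nonneg hx) _

-- FTC on subintervals
private lemma ftc_sub {a b : ℝ} {F F' : ℝ → ℝ}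
    (hF : ∀ t ∈ Set.Icc a b, HasDerivWithinAt F (F' t) (Set.Icc a b) t)
    (hF' : ContinuousOn F' (Set.Icc a b))
    {u v : ℝ} (hu : u ∈ Set.Icc a b) (hv : v ∈ Set.Icc a b) (huv : u ≤ v) :
    ∫ s in u..v, F' s = F v - F u := by
  have hsub : Set.Icc u v ⊆ Set.Icc a b := Set.Icc_subset_Icc hu.1 hv.2
  apply intervalIntegral.integral_eq_sub_of_hasDeriv_right_of_le huv
  · exact fun t ht => ((hF t (hsub ht)).continuousWithinAt).mono hsub
  · intro x hx
    have hx' : x ∈ Set.Ioo a b := ⟨lt_of_le_of_lt hu.1 hx.1, lt_of_lt_of_le hx.2 hv.2⟩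
    exact (((hF x (Set.mem_Icc_of_Ioo hx')).hasDerivAt
      (Icc_mem_nhds hx'.1 hx'.2)).hasDerivWithinAt)
  · exact (hF'.mono (Set.uIcc_subset_Icc hu hv)).intervalIntegrable

private lemma small_interval {a b : ℝ} {f f' g' : ℝ → ℝ}
    (hf : ∀ t ∈ Set.Icc a b, HasDerivWithinAt f (f' t) (Set.Icc a b) t)
    (hf' : ContinuousOn f' (Set.Icc a b))
    (hg' : ContinuousOn g' (Set.Icc a b))
    (hgpos : ∀ t ∈ Set.Icc a b, 0 < g' t)
    {F G ε0 c η : ℝ} (hε0 : 0 < ε0) (hc : 0 ≤ c) (hη : 0 < η)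
    (hF : ∀ s ∈ Set.Icc a b, |f' s| ≤ F) (hG : ∀ s ∈ Set.Icc a b, g' s ≤ G)
    (hkey : ∀ p q : ℝ, 0 ≤ p → 0 ≤ q → p ≤ F → q ≤ G →
      Real.sqrt ((p + ε0) * (q + ε0)) ≤ Real.sqrt (p * q) + c)
    (hucf : ∀ s ∈ Set.Icc a b, ∀ t ∈ Set.Icc a b, |s - t| ≤ η → |f' s - f' t| ≤ ε0)
    (hucg : ∀ s ∈ Set.Icc a b, ∀ t ∈ Set.Icc a b, |s - t| ≤ η → |g' s - g' t| ≤ ε0)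
    {u v : ℝ} (hu : u ∈ Set.Icc a b) (hv : v ∈ Set.Icc a b) (huv : u ≤ v) (hlen : v - u ≤ η) :
    ∫ s in u..v, Real.sqrt (|f' s| * g' s) ≤
      Real.sqrt (2 * ∫ s in u..v, (f s - sInf (f '' Set.Icc u v)) * g' s) + c * (v - u) := by
  rcases eq_or_lt_of_le huv with rfl | hlt
  · simp
  set m := sInf (f '' Set.Icc u v) with hmdef
  have hsub : Set.Icc u v ⊆ Set.Icc a b := Set.Icc_subset_Icc hu.1 hv.2
  have hfc : ContinuousOn f (Set.Icc a b) := fun t ht => (hf t ht).continuousWithinAt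
  have hii : ∀ (h : ℝ → ℝ), ContinuousOn h (Set.Icc a b) → ∀ {x y : ℝ}, x ∈ Set.Icc a b →
      y ∈ Set.Icc a b → IntervalIntegrable h MeasureTheory.volume x y :=
    fun h hh x y hx hy => (hh.mono (Set.uIcc_subset_Icc hx hy)).intervalIntegrable
  have hgc : ContinuousOn (fun s => (f s - m) * g' s) (Set.Icc a b) :=
    (hfc.sub continuousOn_const).mul hg'
  have hm : ∀ s ∈ Set.Icc u v, m ≤ f s := fun s hs =>
    csInf_le (isCompact_Icc.image_of_continuousOn (hfc.mono hsub)).bddBelow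
      (Set.mem_image_of_mem f hs)
  have gapnn : 0 ≤ ∫ s in u..v, (f s - m) * g' s :=
    intervalIntegral.integral_nonneg huv
      (fun s hs => mul_nonneg (sub_nonneg.2 (hm s hs)) (hgpos s (hsub hs)).le)
  -- min of g'
  obtain ⟨s₁, hs₁, hminq⟩ := isCompact_Icc.exists_isMinOn (Set.nonempty_Icc.mpr huv)
    (hg'.mono hsub)
  set q := g' s₁ with hqdef
  have hql : ∀ s ∈ Set.Icc u v, q ≤ g' s := fun s hs => isMinOn_iff.mp hminq s hs
  have hq0 : 0 < q := hgpos s₁ (hsub hs₁)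
  have hqG : q ≤ G := hG s₁ (hsub hs₁)
  have hdist : ∀ s ∈ Set.Icc u v, ∀ s' ∈ Set.Icc u v, |s - s'| ≤ η := by
    intro s hs s' hs'
    rw [abs_sub_le_iff]
    constructor <;> linarith [hs.1, hs.2, hs'.1, hs'.2]
  have hqu : ∀ s ∈ Set.Icc u v, g' s ≤ q + ε0 := by
    intro s hs
    have := hucg s (hsub hs) s₁ (hsub hs₁) (hdist s hs s₁ hs₁)
    have := abs_le.mp this
    linarith [this.2]
  -- key claim: a lower slope p
  have claim : ∃ p : ℝ, 0 ≤ p ∧ p ≤ F ∧ (∀ s ∈ Set.Icc u v, |f' s| ≤ p + ε0) ∧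
      p * q * (v - u) ^ 2 ≤ 2 * ∫ s in u..v, (f s - m) * g' s := by
    have hcompute : ∀ p' : ℝ, (∫ s in u..v, p' * (s - u)) = p' * ((v - u) ^ 2 / 2) := by
      intro p'
      rw [intervalIntegral.integral_const_mul]
      have h2 : (∫ s in u..v, (s - u)) = (v - u) ^ 2 / 2 := by
        have := intervalIntegral.integral_comp_sub_right (a := u) (b := v) (fun x => x) u
        simp only [integral_id] at this
        rw [this]
        ring
      rw [h2]
    have hcompute' : ∀ p' : ℝ, (∫ s in u..v, p' * (v - s)) = p' * ((v - u) ^ 2 / 2) := by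
      intro p'
      rw [intervalIntegral.integral_const_mul]
      have h2 : (∫ s in u..v, (v - s)) = (v - u) ^ 2 / 2 := by
        have := intervalIntegral.integral_comp_sub_left (a := u) (b := v) (fun x => x) v
        simp only [integral_id] at this
        rw [this]
        ring
      rw [h2]
    by_cases hA : ∀ s ∈ Set.Icc u v, 0 ≤ f' s
    · -- f nondecreasing
      obtain ⟨s₀, hs₀, hminp⟩ := isCompact_Icc.exists_isMinOn (Set.nonempty_Icc.mpr huv)
        (hf'.mono hsub)
      refine ⟨f' s₀, hA s₀ hs₀, le_trans (le_abs_self _) (hF s₀ (hsub hs₀)), ?_, ?_⟩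
      · intro s hs
        rw [abs_of_nonneg (hA s hs)]
        have := (abs_le.mp (hucf s (hsub hs) s₀ (hsub hs₀) (hdist s hs s₀ hs₀))).2
        linarith
      · have hpoint : ∀ s ∈ Set.Icc u v, (f' s₀ * q) * (s - u) ≤ (f s - m) * g' s := by
          intro s hs
          have h1 : f' s₀ * (s - u) ≤ f s - f u := by
            have hfs := ftc_sub hf hf' hu (hsub hs) hs.1
            have hmono : (∫ x in u..s, (f' s₀ : ℝ)) ≤ ∫ x in u..s, f' x := by
              apply intervalIntegral.integral_mono_on hs.1 intervalIntegrable_const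
                (hii f' hf' hu (hsub hs))
              intro x hx
              exact isMinOn_iff.mp hminp x (Set.Icc_subset_Icc_right hs.2 hx)
            simpa [intervalIntegral.integral_const, smul_eq_mul, hfs, mul_comm] using hmono
          have h2 : m ≤ f u := hm u ⟨le_refl u, huv⟩
          have h3 : f' s₀ * (s - u) ≤ f s - m := by linarith
          have h4 : (0:ℝ) ≤ f' s₀ * (s - u) :=
            mul_nonneg (hA s₀ hs₀) (by linarith [hs.1])
          calc (f' s₀ * q) * (s - u) = (f' s₀ * (s - u)) * q := by ring
            _ ≤ (f s - m) * g' s := mul_le_mul h3 (hql s hs) hq0.le (by linarith)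
        have hmono2 : (∫ s in u..v, (f' s₀ * q) * (s - u)) ≤
            ∫ s in u..v, (f s - m) * g' s := by
          apply intervalIntegral.integral_mono_on huv ?_ (hii _ hgc hu hv) hpoint
          exact (continuous_const.mul (continuous_id'.sub continuous_const)).intervalIntegrable u v
        rw [hcompute (f' s₀ * q)] at hmono2
        nlinarith
    · by_cases hB : ∀ s ∈ Set.Icc u v, f' s ≤ 0
      · -- f nonincreasing
        obtain ⟨s₀, hs₀, hmaxp⟩ := isCompact_Icc.exists_isMaxOn (Set.nonempty_Icc.mpr huv)
          (hf'.mono hsub)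
        refine ⟨-f' s₀, by linarith [hB s₀ hs₀], le_trans (neg_le_abs _) (hF s₀ (hsub hs₀)),
          ?_, ?_⟩
        · intro s hs
          rw [abs_of_nonpos (hB s hs)]
          have := (abs_le.mp (hucf s₀ (hsub hs₀) s (hsub hs) (hdist s₀ hs₀ s hs))).2
          linarith
        · have hpoint : ∀ s ∈ Set.Icc u v, ((-f' s₀) * q) * (v - s) ≤ (f s - m) * g' s := by
            intro s hs
            have h1 : f v - f s ≤ f' s₀ * (v - s) := by
              have hfs := ftc_sub hf hf' (hsub hs) hv hs.2
              have hmono : (∫ x in s..v, f' x) ≤ ∫ x in s..v, (f' s₀ : ℝ) := by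
                apply intervalIntegral.integral_mono_on hs.2 (hii f' hf' (hsub hs) hv)
                  intervalIntegrable_const
                intro x hx
                exact isMaxOn_iff.mp hmaxp x (Set.Icc_subset_Icc_left hs.1 hx)
              simpa [intervalIntegral.integral_const, smul_eq_mul, hfs, mul_comm] using hmono
            have h2 : m ≤ f v := hm v ⟨huv, le_refl v⟩
            have h3 : (-f' s₀) * (v - s) ≤ f s - m := by nlinarith
            have h4 : (0:ℝ) ≤ (-f' s₀) * (v - s) :=
              mul_nonneg (by linarith [hB s₀ hs₀]) (by linarith [hs.2])
            calc ((-f' s₀) * q) * (v - s) = ((-f' s₀) * (v - s)) * q := by ring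
              _ ≤ (f s - m) * g' s := mul_le_mul h3 (hql s hs) hq0.le (by linarith)
          have hmono2 : (∫ s in u..v, ((-f' s₀) * q) * (v - s)) ≤
              ∫ s in u..v, (f s - m) * g' s := by
            apply intervalIntegral.integral_mono_on huv ?_ (hii _ hgc hu hv) hpoint
            exact (continuous_const.mul (continuous_const.sub continuous_id')).intervalIntegrable u v
          rw [hcompute' ((-f' s₀) * q)] at hmono2
          nlinarith
      · -- sign change: a zero of f' in [u,v]
        push_neg at hA hB
        obtain ⟨s₂, hs₂, h2⟩ := hA
        obtain ⟨s₃, hs₃, h3⟩ := hB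
        have hzero : ∃ z ∈ Set.uIcc s₂ s₃, f' z = 0 := by
          have hiv := intermediate_value_uIcc
            (hf'.mono ((Set.uIcc_subset_Icc hs₂ hs₃).trans hsub))
          have h0 : (0:ℝ) ∈ Set.uIcc (f' s₂) (f' s₃) := by
            rw [Set.mem_uIcc]
            left; exact ⟨by linarith, by linarith⟩
          obtain ⟨z, hz, hz0⟩ := hiv h0
          exact ⟨z, hz, hz0⟩
        obtain ⟨z, hz, hz0⟩ := hzero
        have hzuv : z ∈ Set.Icc u v := Set.uIcc_subset_Icc hs₂ hs₃ hz
        refine ⟨0, le_refl 0, ?_, ?_, by nlinarith⟩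
        · have := hF s₂ (hsub hs₂); exact le_trans (abs_nonneg _) this
        · intro s hs
          have := hucf s (hsub hs) z (hsub hzuv) (hdist s hs z hzuv)
          calc |f' s| = |f' s - f' z| := by rw [hz0, sub_zero]
            _ ≤ ε0 := this
            _ = 0 + ε0 := by ring
  obtain ⟨p, hp0, hpF, hpu, hplow⟩ := claim
  have hsqc : ContinuousOn (fun s => Real.sqrt (|f' s| * g' s)) (Set.Icc a b) :=
    Real.continuous_sqrt.comp_continuousOn (hf'.abs.mul hg')
  have step1 : ∫ s in u..v, Real.sqrt (|f' s| * g' s) ≤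
      Real.sqrt ((p + ε0) * (q + ε0)) * (v - u) := by
    have h1 : ∫ s in u..v, Real.sqrt (|f' s| * g' s) ≤
        ∫ _ in u..v, Real.sqrt ((p + ε0) * (q + ε0)) := by
      apply intervalIntegral.integral_mono_on huv (hii _ hsqc hu hv) intervalIntegrable_const
      intro s hs
      apply Real.sqrt_le_sqrt
      exact mul_le_mul (hpu s hs) (hqu s hs) (hgpos s (hsub hs)).le (by positivity)
    simpa [intervalIntegral.integral_const, smul_eq_mul, mul_comm] using h1
  have step2 : Real.sqrt (p * q) * (v - u) ≤
      Real.sqrt (2 * ∫ s in u..v, (f s - m) * g' s) := by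
    have e : Real.sqrt (p * q) * (v - u) = Real.sqrt (p * q * (v - u) ^ 2) := by
      rw [Real.sqrt_mul (mul_nonneg hp0 hq0.le), Real.sqrt_sq (by linarith)]
    rw [e]
    exact Real.sqrt_le_sqrt hplow
  have hkey' := hkey p q hp0 hq0.le hpF hqG
  nlinarith [mul_le_mul_of_nonneg_right hkey' (by linarith : (0:ℝ) ≤ v - u)]

private lemma medium_interval {a b : ℝ} {f f' g' : ℝ → ℝ}
    (hf : ∀ t ∈ Set.Icc a b, HasDerivWithinAt f (f' t) (Set.Icc a b) t)
    (hf' : ContinuousOn f' (Set.Icc a b))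
    (hg' : ContinuousOn g' (Set.Icc a b))
    (hgpos : ∀ t ∈ Set.Icc a b, 0 < g' t)
    {F G ε0 c η : ℝ} (hε0 : 0 < ε0) (hc : 0 ≤ c) (hη : 0 < η)
    (hF : ∀ s ∈ Set.Icc a b, |f' s| ≤ F) (hG : ∀ s ∈ Set.Icc a b, g' s ≤ G)
    (hkey : ∀ p q : ℝ, 0 ≤ p → 0 ≤ q → p ≤ F → q ≤ G →
      Real.sqrt ((p + ε0) * (q + ε0)) ≤ Real.sqrt (p * q) + c)
    (hucf : ∀ s ∈ Set.Icc a b, ∀ t ∈ Set.Icc a b, |s - t| ≤ η → |f' s - f' t| ≤ ε0)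
    (hucg : ∀ s ∈ Set.Icc a b, ∀ t ∈ Set.Icc a b, |s - t| ≤ η → |g' s - g' t| ≤ ε0)
    {u v : ℝ} (hu : u ∈ Set.Icc a b) (hv : v ∈ Set.Icc a b) (hlt : u < v) :
    ∫ s in u..v, Real.sqrt (|f' s| * g' s) ≤
      Real.sqrt (⌈(v - u) / η⌉₊ : ℝ) *
        Real.sqrt (2 * ∫ s in u..v, (f s - sInf (f '' Set.Icc u v)) * g' s) +
      c * (v - u) := by
  have hfc : ContinuousOn f (Set.Icc a b) := fun t ht => (hf t ht).continuousWithinAt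
  have hii : ∀ (h : ℝ → ℝ), ContinuousOn h (Set.Icc a b) → ∀ {x y : ℝ}, x ∈ Set.Icc a b →
      y ∈ Set.Icc a b → IntervalIntegrable h MeasureTheory.volume x y :=
    fun h hh x y hx hy => (hh.mono (Set.uIcc_subset_Icc hx hy)).intervalIntegrable
  have hsqc : ContinuousOn (fun s => Real.sqrt (|f' s| * g' s)) (Set.Icc a b) :=
    Real.continuous_sqrt.comp_continuousOn (hf'.abs.mul hg')
  have hsub : Set.Icc u v ⊆ Set.Icc a b := Set.Icc_subset_Icc hu.1 hv.2
  set m := sInf (f '' Set.Icc u v) with hmdef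
  have hgc : ContinuousOn (fun s => (f s - m) * g' s) (Set.Icc a b) :=
    (hfc.sub continuousOn_const).mul hg'
  set K := ⌈(v - u) / η⌉₊ with hKdef
  have hK : 0 < K := Nat.ceil_pos.mpr (div_pos (by linarith) hη)
  have hKR : (0:ℝ) < K := by exact_mod_cast hK
  set L := (v - u) / K with hLdef
  have hL : 0 < L := div_pos (by linarith) hKR
  have hLη : L ≤ η := by
    rw [hLdef, div_le_iff₀ hKR]
    have h1 : (v - u) / η ≤ K := Nat.le_ceil _
    calc v - u = ((v - u) / η) * η := by field_simp
      _ ≤ K * η := by nlinarith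
      _ = η * K := mul_comm _ _
  set w : ℕ → ℝ := fun j => u + j * L with hwdef
  have hw0 : w 0 = u := by simp [hwdef]
  have hwK : w K = v := by
    simp only [hwdef, hLdef]
    field_simp
    ring
  have hwstep : ∀ j : ℕ, w (j + 1) - w j = L := by
    intro j; simp only [hwdef]; push_cast; ring
  have hwle : ∀ j : ℕ, w j ≤ w (j + 1) := by
    intro j; nlinarith [hwstep j]
  have hwmem : ∀ j ≤ K, w j ∈ Set.Icc u v := by
    intro j hj
    constructor
    · simp only [hwdef]; nlinarith [Nat.cast_nonneg (α := ℝ) j]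
    · have : (j : ℝ) ≤ K := by exact_mod_cast hj
      have : w j ≤ w K := by simp only [hwdef]; nlinarith
      rw [hwK] at this; exact this
  have hwab : ∀ j ≤ K, w j ∈ Set.Icc a b := fun j hj => hsub (hwmem j hj)
  -- split of the sqrt integral
  have hJsplit : ∑ j ∈ Finset.range K, (∫ s in w j..w (j+1), Real.sqrt (|f' s| * g' s)) =
      ∫ s in u..v, Real.sqrt (|f' s| * g' s) := by
    have := intervalIntegral.sum_integral_adjacent_intervals (a := w) (n := K)
      (f := fun s => Real.sqrt (|f' s| * g' s)) (μ := MeasureTheory.volume)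
      (fun j hj => hii _ hsqc (hwab j hj.le) (hwab (j+1) hj))
    rw [this, hw0, hwK]
  -- split of the gap integral
  have hGsplit : ∑ j ∈ Finset.range K, (∫ s in w j..w (j+1), (f s - m) * g' s) =
      ∫ s in u..v, (f s - m) * g' s := by
    have := intervalIntegral.sum_integral_adjacent_intervals (a := w) (n := K)
      (f := fun s => (f s - m) * g' s) (μ := MeasureTheory.volume)
      (fun j hj => hii _ hgc (hwab j hj.le) (hwab (j+1) hj))
    rw [this, hw0, hwK]
  have hgapj_nn : ∀ j < K, 0 ≤ ∫ s in w j..w (j+1),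
      (f s - sInf (f '' Set.Icc (w j) (w (j+1)))) * g' s := by
    intro j hj
    apply intervalIntegral.integral_nonneg (hwle j)
    intro s hs
    have hsab : s ∈ Set.Icc a b := Set.Icc_subset_Icc (hwab j hj.le).1 (hwab (j+1) hj).2 hs
    refine mul_nonneg (sub_nonneg.2 ?_) (hgpos s hsab).le
    exact csInf_le (isCompact_Icc.image_of_continuousOn
      (hfc.mono (Set.Icc_subset_Icc (hwab j hj.le).1 (hwab (j+1) hj).2))).bddBelow
      (Set.mem_image_of_mem f hs)
  have hgapj_le : ∀ j < K, (∫ s in w j..w (j+1),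
      (f s - sInf (f '' Set.Icc (w j) (w (j+1)))) * g' s) ≤
      ∫ s in w j..w (j+1), (f s - m) * g' s := by
    intro j hj
    apply intervalIntegral.integral_mono_on (hwle j)
      (hii _ ((hfc.sub continuousOn_const).mul hg') (hwab j hj.le) (hwab (j+1) hj))
      (hii _ hgc (hwab j hj.le) (hwab (j+1) hj))
    intro s hs
    have hsab : s ∈ Set.Icc a b := Set.Icc_subset_Icc (hwab j hj.le).1 (hwab (j+1) hj).2 hs
    have hmm : m ≤ sInf (f '' Set.Icc (w j) (w (j+1))) := by
      apply csInf_le_csInf (isCompact_Icc.image_of_continuousOn (hfc.mono hsub)).bddBelow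
        ((Set.nonempty_Icc.mpr (hwle j)).image f)
      exact Set.image_mono (Set.Icc_subset_Icc (hwmem j hj.le).1 (hwmem (j+1) hj).2)
    have := (hgpos s hsab).le
    show (f s - sInf (f '' Set.Icc (w j) (w (j+1)))) * g' s ≤ (f s - m) * g' s
    nlinarith
  -- apply small_interval to each piece
  have hsmall : ∀ j < K, (∫ s in w j..w (j+1), Real.sqrt (|f' s| * g' s)) ≤
      Real.sqrt (2 * ∫ s in w j..w (j+1),
        (f s - sInf (f '' Set.Icc (w j) (w (j+1)))) * g' s) + c * L := by
    intro j hj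
    have := small_interval hf hf' hg' hgpos hε0 hc hη hF hG hkey hucf hucg
      (hwab j hj.le) (hwab (j+1) hj) (hwle j) (by rw [hwstep j]; exact hLη)
    rwa [hwstep j] at this
  -- sum up
  rw [← hJsplit]
  have hsum1 : ∑ j ∈ Finset.range K, (∫ s in w j..w (j+1), Real.sqrt (|f' s| * g' s)) ≤
      (∑ j ∈ Finset.range K, Real.sqrt (2 * ∫ s in w j..w (j+1),
        (f s - sInf (f '' Set.Icc (w j) (w (j+1)))) * g' s)) + c * (v - u) := by
    have := Finset.sum_le_sum (fun j hj => hsmall j (Finset.mem_range.mp hj))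
    rw [Finset.sum_add_distrib] at this
    have hKL : ∑ _j ∈ Finset.range K, c * L = c * (v - u) := by
      rw [Finset.sum_const, Finset.card_range]
      simp only [nsmul_eq_mul, hLdef]
      field_simp
    rw [hKL] at this
    exact this
  have hcs : (∑ j ∈ Finset.range K, Real.sqrt (2 * ∫ s in w j..w (j+1),
        (f s - sInf (f '' Set.Icc (w j) (w (j+1)))) * g' s)) ≤
      Real.sqrt K * Real.sqrt (2 * ∫ s in u..v, (f s - m) * g' s) := by
    have h1 := cs_sqrt (n := K) (fun _ => (1:ℝ))
      (fun j => 2 * ∫ s in w j..w (j+1),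
        (f s - sInf (f '' Set.Icc (w j) (w (j+1)))) * g' s)
      (fun j _ => zero_le_one)
      (fun j hj => by
        show (0:ℝ) ≤ 2 * _
        linarith [hgapj_nn j (Finset.mem_range.mp hj)])
    simp only [Real.sqrt_one, one_mul, Finset.sum_const, Finset.card_range, nsmul_eq_mul,
      mul_one] at h1
    refine le_trans h1 ?_
    apply mul_le_mul_of_nonneg_left ?_ (Real.sqrt_nonneg _)
    apply Real.sqrt_le_sqrt
    rw [← hGsplit, Finset.mul_sum]
    apply Finset.sum_le_sum
    intro j hj
    have := hgapj_le j (Finset.mem_range.mp hj)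
    linarith
  calc ∑ j ∈ Finset.range K, (∫ s in w j..w (j+1), Real.sqrt (|f' s| * g' s))
      ≤ (∑ j ∈ Finset.range K, Real.sqrt (2 * ∫ s in w j..w (j+1),
          (f s - sInf (f '' Set.Icc (w j) (w (j+1)))) * g' s)) + c * (v - u) := hsum1
    _ ≤ Real.sqrt K * Real.sqrt (2 * ∫ s in u..v, (f s - m) * g' s) + c * (v - u) := by
        linarith [hcs]

private lemma sqrt_add_le' (x y : ℝ) (hx : 0 ≤ x) (hy : 0 ≤ y) :
    Real.sqrt (x + y) ≤ Real.sqrt x + Real.sqrt y := by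
  have h1 : x + y ≤ (Real.sqrt x + Real.sqrt y) ^ 2 := by
    nlinarith [Real.sq_sqrt hx, Real.sq_sqrt hy, Real.sqrt_nonneg x, Real.sqrt_nonneg y,
      mul_nonneg (Real.sqrt_nonneg x) (Real.sqrt_nonneg y)]
  calc Real.sqrt (x + y) ≤ Real.sqrt ((Real.sqrt x + Real.sqrt y) ^ 2) := Real.sqrt_le_sqrt h1
    _ = Real.sqrt x + Real.sqrt y := Real.sqrt_sq (by positivity)

set_option maxHeartbeats 1000000 in
/-- Uniform lower estimate: for every `δ > 0` there is `r` such that for every `n`-partition `Δ`,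
`√(n+r) · √(∫f dg − LS(Δ)) ≥ (1/√2)∫√(|f'|g') − δ(b−a)`. -/
theorem uniform_lower_estimate
    (a b : ℝ) (hab : a < b) (f g f' g' : ℝ → ℝ)
    (hf : ∀ t ∈ Set.Icc a b, HasDerivWithinAt f (f' t) (Set.Icc a b) t)
    (hf' : ContinuousOn f' (Set.Icc a b))
    (hzeros : {t ∈ Set.Icc a b | f' t = 0}.Finite)
    (hg : ∀ t ∈ Set.Icc a b, HasDerivWithinAt g (g' t) (Set.Icc a b) t)
    (hg' : ContinuousOn g' (Set.Icc a b))
    (hgpos : ∀ t ∈ Set.Icc a b, 0 < g' t)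
    (δ : ℝ) (hδ : 0 < δ) :
    ∃ r : ℕ, 0 < r ∧ ∀ n : ℕ, 0 < n → ∀ t : ℕ → ℝ,
      t 0 = a → t n = b → (∀ i < n, t i < t (i + 1)) →
      Real.sqrt ((n : ℝ) + r) *
        Real.sqrt ((∫ s in a..b, f s * g' s) -
          ∑ i ∈ Finset.range n,
            sInf (f '' Set.Icc (t i) (t (i + 1))) * (g (t (i + 1)) - g (t i))) ≥
        (1 / Real.sqrt 2) * (∫ s in a..b, Real.sqrt (|f' s| * g' s)) - δ * (b - a) := by
  have hfc : ContinuousOn f (Set.Icc a b) := fun s hs => (hf s hs).continuousWithinAt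
  have hii : ∀ (h : ℝ → ℝ), ContinuousOn h (Set.Icc a b) → ∀ {x y : ℝ}, x ∈ Set.Icc a b →
      y ∈ Set.Icc a b → IntervalIntegrable h MeasureTheory.volume x y :=
    fun h hh x y hx hy => (hh.mono (Set.uIcc_subset_Icc hx hy)).intervalIntegrable
  have hamem : a ∈ Set.Icc a b := ⟨le_refl a, hab.le⟩
  -- bounds on f' and g'
  obtain ⟨F, hFb⟩ := isCompact_Icc.exists_bound_of_continuousOn hf'
  obtain ⟨G, hGb⟩ := isCompact_Icc.exists_bound_of_continuousOn hg'
  have hFb' : ∀ s ∈ Set.Icc a b, |f' s| ≤ F := fun s hs => hFb s hs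
  have hGb' : ∀ s ∈ Set.Icc a b, g' s ≤ G := fun s hs => (le_abs_self _).trans (hGb s hs)
  have hF0 : 0 ≤ F := (abs_nonneg _).trans (hFb' a hamem)
  have hG0 : 0 ≤ G := (abs_nonneg _).trans (hGb a hamem)
  -- choose ε0
  set ε0 : ℝ := min 1 (2 * δ ^ 2 / (F + G + 1)) with hε0def
  have hε0 : 0 < ε0 := lt_min one_pos (by positivity)
  have hkey : ∀ p q : ℝ, 0 ≤ p → 0 ≤ q → p ≤ F → q ≤ G →
      Real.sqrt ((p + ε0) * (q + ε0)) ≤ Real.sqrt (p * q) + Real.sqrt 2 * δ := by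
    intro p q hp hq hpF hqG
    have hε1 : ε0 ≤ 1 := min_le_left _ _
    have hε2 : ε0 * (F + G + 1) ≤ 2 * δ ^ 2 := by
      have := min_le_right 1 (2 * δ ^ 2 / (F + G + 1))
      rw [← hε0def] at this
      have hpos : (0:ℝ) < F + G + 1 := by linarith
      calc ε0 * (F + G + 1) ≤ (2 * δ ^ 2 / (F + G + 1)) * (F + G + 1) := by nlinarith
        _ = 2 * δ ^ 2 := by field_simp
    have h1 : (p + ε0) * (q + ε0) ≤ p * q + 2 * δ ^ 2 := by nlinarith
    calc Real.sqrt ((p + ε0) * (q + ε0)) ≤ Real.sqrt (p * q + 2 * δ ^ 2) :=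
          Real.sqrt_le_sqrt h1
      _ ≤ Real.sqrt (p * q) + Real.sqrt (2 * δ ^ 2) :=
          sqrt_add_le' _ _ (mul_nonneg hp hq) (by positivity)
      _ = Real.sqrt (p * q) + Real.sqrt 2 * δ := by
          rw [show Real.sqrt (2 * δ ^ 2) = Real.sqrt 2 * δ by
            rw [Real.sqrt_mul (by norm_num : (0:ℝ) ≤ 2), Real.sqrt_sq hδ.le]]
  -- uniform continuity
  have hucf0 := Metric.uniformContinuousOn_iff.mp
    (isCompact_Icc.uniformContinuousOn_of_continuous hf') ε0 hε0
  have hucg0 := Metric.uniformContinuousOn_iff.mp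
    (isCompact_Icc.uniformContinuousOn_of_continuous hg') ε0 hε0
  obtain ⟨η₁, hη₁, hucf1⟩ := hucf0
  obtain ⟨η₂, hη₂, hucg1⟩ := hucg0
  set η : ℝ := min η₁ η₂ / 2 with hηdef
  have hη : 0 < η := by positivity
  have hucf : ∀ s ∈ Set.Icc a b, ∀ u ∈ Set.Icc a b, |s - u| ≤ η → |f' s - f' u| ≤ ε0 := by
    intro s hs u hu hd
    have h1 : dist s u < η₁ := by
      rw [Real.dist_eq]
      calc |s - u| ≤ η := hd
        _ < min η₁ η₂ := by rw [hηdef]; linarith [lt_min hη₁ hη₂]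
        _ ≤ η₁ := min_le_left _ _
    have := hucf1 s hs u hu h1
    rw [Real.dist_eq] at this
    exact this.le
  have hucg : ∀ s ∈ Set.Icc a b, ∀ u ∈ Set.Icc a b, |s - u| ≤ η → |g' s - g' u| ≤ ε0 := by
    intro s hs u hu hd
    have h1 : dist s u < η₂ := by
      rw [Real.dist_eq]
      calc |s - u| ≤ η := hd
        _ < min η₁ η₂ := by rw [hηdef]; linarith [lt_min hη₁ hη₂]
        _ ≤ η₂ := min_le_right _ _
    have := hucg1 s hs u hu h1
    rw [Real.dist_eq] at this
    exact this.le
  -- choose r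
  refine ⟨⌈(b - a) / η⌉₊, Nat.ceil_pos.mpr (div_pos (by linarith) hη), ?_⟩
  intro n hn t ht0 htn hts
  set r : ℕ := ⌈(b - a) / η⌉₊ with hrdef
  have hmono := part_mono hts
  have htmem : ∀ i ≤ n, t i ∈ Set.Icc a b := by
    intro i hi
    constructor
    · rw [← ht0]; exact hmono i hi 0 (Nat.zero_le i)
    · rw [← htn]; exact hmono n le_rfl i hi
  set m : ℕ → ℝ := fun i => sInf (f '' Set.Icc (t i) (t (i + 1))) with hmdef
  set gap : ℕ → ℝ := fun i => ∫ s in t i..t (i + 1), (f s - m i) * g' s with hgapdef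
  have hgap_nn : ∀ i < n, 0 ≤ gap i := by
    intro i hi
    apply intervalIntegral.integral_nonneg (hts i hi).le
    intro s hs
    have hsab : s ∈ Set.Icc a b :=
      Set.Icc_subset_Icc (htmem i hi.le).1 (htmem (i+1) hi).2 hs
    refine mul_nonneg (sub_nonneg.2 ?_) (hgpos s hsab).le
    exact csInf_le (isCompact_Icc.image_of_continuousOn
      (hfc.mono (Set.Icc_subset_Icc (htmem i hi.le).1 (htmem (i+1) hi).2))).bddBelow
      (Set.mem_image_of_mem f hs)
  -- the gap identity
  have hEq : (∫ s in a..b, f s * g' s) -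
      (∑ i ∈ Finset.range n, m i * (g (t (i + 1)) - g (t i))) =
      ∑ i ∈ Finset.range n, gap i := by
    have hsplit : ∑ i ∈ Finset.range n, (∫ s in t i..t (i+1), f s * g' s) =
        ∫ s in a..b, f s * g' s := by
      have := intervalIntegral.sum_integral_adjacent_intervals (a := t) (n := n)
        (f := fun s => f s * g' s) (μ := MeasureTheory.volume)
        (fun i hi => hii _ (hfc.mul hg') (htmem i hi.le) (htmem (i+1) hi))
      rw [this, ht0, htn]
    rw [← hsplit, ← Finset.sum_sub_distrib]
    apply Finset.sum_congr rfl
    intro i hi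
    have hi' := Finset.mem_range.mp hi
    have hgd : g (t (i + 1)) - g (t i) = ∫ s in t i..t (i+1), g' s :=
      (ftc_sub hg hg' (htmem i hi'.le) (htmem (i+1) hi') (hts i hi').le).symm
    have hsub : (∫ s in t i..t (i+1), (f s - m i) * g' s) =
        (∫ s in t i..t (i+1), f s * g' s) - m i * ∫ s in t i..t (i+1), g' s := by
      have h1 : (∫ s in t i..t (i+1), (f s - m i) * g' s) =
          (∫ s in t i..t (i+1), (f s * g' s - m i * g' s)) := by
        congr 1; funext s; ring
      rw [h1, intervalIntegral.integral_sub (f := fun s => f s * g' s) (g := fun s => m i * g' s)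
        (hii _ (hfc.mul hg') (htmem i hi'.le) (htmem (i+1) hi'))
        (hii _ (continuousOn_const.mul hg') (htmem i hi'.le) (htmem (i+1) hi')),
        intervalIntegral.integral_const_mul]
    rw [hgd]
    exact hsub.symm
  rw [hEq]
  -- main estimate
  set K : ℕ → ℕ := fun i => ⌈(t (i + 1) - t i) / η⌉₊ with hKdef
  have hJi : ∀ i < n, (∫ s in t i..t (i+1), Real.sqrt (|f' s| * g' s)) ≤
      Real.sqrt (K i : ℝ) * Real.sqrt (2 * gap i) + Real.sqrt 2 * δ * (t (i+1) - t i) := by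
    intro i hi
    have := medium_interval hf hf' hg' hgpos hε0 (by positivity) hη hFb' hGb' hkey hucf hucg
      (htmem i hi.le) (htmem (i+1) hi) (hts i hi)
    calc (∫ s in t i..t (i+1), Real.sqrt (|f' s| * g' s)) ≤
        Real.sqrt (⌈(t (i+1) - t i) / η⌉₊ : ℝ) * Real.sqrt (2 * gap i) +
          Real.sqrt 2 * δ * (t (i+1) - t i) := this
      _ = Real.sqrt (K i : ℝ) * Real.sqrt (2 * gap i) + Real.sqrt 2 * δ * (t (i+1) - t i) := by
          rw [hKdef]
  have hsqc : ContinuousOn (fun s => Real.sqrt (|f' s| * g' s)) (Set.Icc a b) :=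
    Real.continuous_sqrt.comp_continuousOn (hf'.abs.mul hg')
  have hTsplit : ∑ i ∈ Finset.range n, (∫ s in t i..t (i+1), Real.sqrt (|f' s| * g' s)) =
      ∫ s in a..b, Real.sqrt (|f' s| * g' s) := by
    have := intervalIntegral.sum_integral_adjacent_intervals (a := t) (n := n)
      (f := fun s => Real.sqrt (|f' s| * g' s)) (μ := MeasureTheory.volume)
      (fun i hi => hii _ hsqc (htmem i hi.le) (htmem (i+1) hi))
    rw [this, ht0, htn]
  have hlensum : ∑ i ∈ Finset.range n, (t (i+1) - t i) = b - a := by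
    rw [Finset.sum_range_sub (f := t), ht0, htn]
  have hT : (∫ s in a..b, Real.sqrt (|f' s| * g' s)) ≤
      (∑ i ∈ Finset.range n, Real.sqrt (K i : ℝ) * Real.sqrt (2 * gap i)) +
        Real.sqrt 2 * δ * (b - a) := by
    rw [← hTsplit]
    have h1 := Finset.sum_le_sum (fun i hi => hJi i (Finset.mem_range.mp hi))
    rw [Finset.sum_add_distrib] at h1
    have h2 : ∑ i ∈ Finset.range n, Real.sqrt 2 * δ * (t (i+1) - t i) =
        Real.sqrt 2 * δ * (b - a) := by
      rw [← Finset.mul_sum, hlensum]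
    rw [h2] at h1
    exact h1
  have hCS : (∑ i ∈ Finset.range n, Real.sqrt (K i : ℝ) * Real.sqrt (2 * gap i)) ≤
      Real.sqrt ((n : ℝ) + r) * (Real.sqrt 2 * Real.sqrt (∑ i ∈ Finset.range n, gap i)) := by
    have h1 := cs_sqrt (n := n) (fun i => (K i : ℝ)) (fun i => 2 * gap i)
      (fun i _ => Nat.cast_nonneg _)
      (fun i hi => by
        show (0:ℝ) ≤ 2 * _
        linarith [hgap_nn i (Finset.mem_range.mp hi)])
    have h2 : Real.sqrt (∑ i ∈ Finset.range n, (K i : ℝ)) ≤ Real.sqrt ((n : ℝ) + r) := by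
      apply Real.sqrt_le_sqrt
      have h3 : ∀ i ∈ Finset.range n, (K i : ℝ) ≤ (t (i+1) - t i) / η + 1 := by
        intro i hi
        have hnn : 0 ≤ (t (i+1) - t i) / η :=
          div_nonneg (by linarith [hts i (Finset.mem_range.mp hi)]) hη.le
        exact (Nat.ceil_lt_add_one hnn).le
      calc ∑ i ∈ Finset.range n, (K i : ℝ) ≤
            ∑ i ∈ Finset.range n, ((t (i+1) - t i) / η + 1) := Finset.sum_le_sum h3
        _ = (b - a) / η + n := by
            rw [Finset.sum_add_distrib, ← Finset.sum_div, hlensum]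
            simp
        _ ≤ (n : ℝ) + r := by
            have := Nat.le_ceil ((b - a) / η)
            rw [← hrdef] at this
            linarith
    have h4 : Real.sqrt (∑ i ∈ Finset.range n, 2 * gap i) =
        Real.sqrt 2 * Real.sqrt (∑ i ∈ Finset.range n, gap i) := by
      rw [← Finset.mul_sum, Real.sqrt_mul (by norm_num)]
    rw [h4] at h1
    have h5 : (0:ℝ) ≤ Real.sqrt 2 * Real.sqrt (∑ i ∈ Finset.range n, gap i) :=
      mul_nonneg (Real.sqrt_nonneg _) (Real.sqrt_nonneg _)
    have h6 : Real.sqrt (∑ x ∈ Finset.range n, ((K x : ℝ))) *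
        (Real.sqrt 2 * Real.sqrt (∑ i ∈ Finset.range n, gap i)) ≤
        Real.sqrt ((n:ℝ) + r) * (Real.sqrt 2 * Real.sqrt (∑ i ∈ Finset.range n, gap i)) :=
      mul_le_mul_of_nonneg_right h2 h5
    exact h1.trans h6
  -- final arithmetic
  set S : ℝ := ∑ i ∈ Finset.range n, gap i with hSdef
  set T : ℝ := ∫ s in a..b, Real.sqrt (|f' s| * g' s) with hTdef
  have hcomb : T ≤ Real.sqrt ((n:ℝ) + r) * (Real.sqrt 2 * Real.sqrt S) +
      Real.sqrt 2 * δ * (b - a) := by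
    refine hT.trans ?_
    linarith [hCS]
  have hs2 : Real.sqrt 2 ≠ 0 := by positivity
  have e1 : (1 / Real.sqrt 2) * (Real.sqrt ((n:ℝ) + r) * (Real.sqrt 2 * Real.sqrt S) +
      Real.sqrt 2 * δ * (b - a)) = Real.sqrt ((n:ℝ) + r) * Real.sqrt S + δ * (b - a) := by
    field_simp
  have hmul := mul_le_mul_of_nonneg_left hcomb
    (by positivity : (0:ℝ) ≤ 1 / Real.sqrt 2)
  rw [e1] at hmul
  rw [ge_iff_le]
  linarith
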